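/- Every quaternion q = a1 + a2*i + a3*j + a4*k is conjugate (congruent) to the complex number a1 + sqrt(a2^2 + a3^2 + a4^2)*i, i.e., there exists a nonzero quaternion w with w q w^{-1} = a1 + sqrt(a2^2+a3^2+a4^2)*i. -/

import Mathlib

open Quaternion

private lemma conj_of_comm {q w c : ℍ[ℝ]} (hw : w ≠ 0) (h : w * q = c * w) :
    w * q * w⁻¹ = c := by
  rw [h, mul_assoc, mul_inv_cancel₀ hw, mul_one]

theorem congruent_to_complex (q : ℍ[ℝ]) :
    ∃ w : ℍ[ℝ], w ≠ 0 ∧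
      w * q * w⁻¹ =
        (⟨q.re, Real.sqrt (q.imI ^ 2 + q.imJ ^ 2 + q.imK ^ 2), 0, 0⟩ : ℍ[ℝ]) := by
  set s : ℝ := Real.sqrt (q.imI ^ 2 + q.imJ ^ 2 + q.imK ^ 2) with hs_def
  have hs : s ^ 2 = q.imI ^ 2 + q.imJ ^ 2 + q.imK ^ 2 := by
    rw [hs_def]; exact Real.sq_sqrt (by positivity)
  by_cases hw : (⟨0, q.imI + s, q.imJ, q.imK⟩ : ℍ[ℝ]) = 0
  · -- degenerate case: imJ = imK = 0, imI = -s ; use w = j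
    rw [QuaternionAlgebra.ext_iff] at hw
    simp only [QuaternionAlgebra.re_zero, QuaternionAlgebra.imI_zero, QuaternionAlgebra.imJ_zero,
      QuaternionAlgebra.imK_zero] at hw
    obtain ⟨-, h1, h2, h3⟩ := hw
    refine ⟨⟨0, 0, 1, 0⟩, ?_, ?_⟩
    · exact fun h => one_ne_zero (congrArg (fun x : ℍ[ℝ] => x.imJ) h)
    · apply conj_of_comm (fun h => one_ne_zero (congrArg (fun x : ℍ[ℝ] => x.imJ) h))
      ext
      · erw [Quaternion.re_mul, Quaternion.re_mul]; dsimp only; nlinarith [hs, h1, h2, h3]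
      · erw [Quaternion.imI_mul, Quaternion.imI_mul]; dsimp only; nlinarith [hs, h1, h2, h3]
      · erw [Quaternion.imJ_mul, Quaternion.imJ_mul]; dsimp only; nlinarith [hs, h1, h2, h3]
      · erw [Quaternion.imK_mul, Quaternion.imK_mul]; dsimp only; nlinarith [hs, h1, h2, h3]
  · refine ⟨⟨0, q.imI + s, q.imJ, q.imK⟩, hw, ?_⟩
    apply conj_of_comm hw
    ext
    · erw [Quaternion.re_mul, Quaternion.re_mul]; dsimp only; nlinarith [hs]
    · erw [Quaternion.imI_mul, Quaternion.imI_mul]; dsimp only; nlinarith [hs]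
    · erw [Quaternion.imJ_mul, Quaternion.imJ_mul]; dsimp only; nlinarith [hs]
    · erw [Quaternion.imK_mul, Quaternion.imK_mul]; dsimp only; nlinarith [hs]
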